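/- Let T = (S, I, O, λ_S, s0, Δ_S) be a complete deterministic TFSM with timeouts and U = (R, I∪{𝟙}, O∪{𝟙}, λ_R, r0) a complete deterministic untimed FSM. If there exists a 𝟙-bisimulation ∼ with (s0,0) ∼ r0, then for every timed input word v = (i1,t1)…(im,tm), 𝟙(B_T(v)) = B_U(𝟙(v)). -/

import Mathlib

open scoped Classical

namespace TFSMPaper

/-- A guard: an interval with integer (natural) endpoints; `hi = none` means `∞`;
`lclosed`/`rclosed` say whether the left/right delimiter is closed. -/
structure Guard where
  lo : ℕ
  hi : Option ℕ
  lclosed : Bool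
  rclosed : Bool
deriving DecidableEq

/-- Membership of a real clock value in a guard. -/
def Guard.mem (g : Guard) (x : ℝ) : Prop :=
  (if g.lclosed then (g.lo : ℝ) ≤ x else (g.lo : ℝ) < x) ∧
  (match g.hi with
    | none => True
    | some n => if g.rclosed then x ≤ (n : ℝ) else x < (n : ℝ))

/-- `J ⊆ g` as subsets of nonnegative reals. -/
def Guard.subset (J g : Guard) : Prop := ∀ x : ℝ, 0 ≤ x → J.mem x → g.mem x

/-- A guard is left-closed and right-open. -/
def Guard.LCRO (g : Guard) : Prop := g.lclosed = true ∧ g.rclosed = false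

/-- The point interval `[n,n]`. -/
def ptG (n : ℕ) : Guard := ⟨n, some n, true, true⟩

/-- The open interval `(n,n+1)`. -/
def opG (n : ℕ) : Guard := ⟨n, some (n + 1), false, false⟩

/-- The unbounded interval `(N,∞)`. -/
def infG (N : ℕ) : Guard := ⟨N, none, false, false⟩

/-- The set `𝕀_N` of abstract intervals. -/
def IN (N : ℕ) : Set Guard :=
  {g | (∃ n ≤ N, g = ptG n) ∨ (∃ n < N, g = opG n) ∨ g = infG N}

/-- All integer constants appearing in `g` are at most `N`. -/
def Guard.boundedBy (g : Guard) (N : ℕ) : Prop :=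
  g.lo ≤ N ∧ ∀ n, g.hi = some n → n ≤ N

/-- A timed word: strictly increasing, nonnegative timestamps. -/
def IsTimedWord {A : Type*} (v : List (A × ℝ)) : Prop :=
  v.Chain' (fun p q => p.2 < q.2) ∧ ∀ p ∈ v, (0 : ℝ) ≤ p.2

/-- Delete the timestamps of a timed word. -/
def untime {A : Type*} (v : List (A × ℝ)) : List A := v.map Prod.fst

/-! ### Untimed FSMs -/

/-- An untimed FSM with input alphabet `Γi`, output alphabet `Γo` and states `R`. -/
structure FSM (Γi Γo R : Type*) where
  trans : R → Γi → Γo → R → Prop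
  init : R

/-- `Run U r v w r'`: from state `r`, reading input word `v`, `U` can produce
output word `w` and reach `r'`. -/
inductive FSM.Run {Γi Γo R : Type*} (U : FSM Γi Γo R) : R → List Γi → List Γo → R → Prop
  | nil (r : R) : FSM.Run U r [] [] r
  | cons {r r' rf : R} {a : Γi} {b : Γo} {v : List Γi} {w : List Γo} :
      U.trans r a b r' → FSM.Run U r' v w rf → FSM.Run U r (a :: v) (b :: w) rf

/-- The behavior of `U`: `w ∈ B_U(v)`. -/
def FSM.Produces {Γi Γo R : Type*} (U : FSM Γi Γo R) (v : List Γi) (w : List Γo) : Prop :=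
  ∃ rf, U.Run U.init v w rf

def FSM.Complete {Γi Γo R : Type*} (U : FSM Γi Γo R) : Prop :=
  ∀ r a, ∃ b r', U.trans r a b r'

def FSM.Deterministic {Γi Γo R : Type*} (U : FSM Γi Γo R) : Prop :=
  ∀ r a b b' r' r'', U.trans r a b r' → U.trans r a b' r'' → b = b' ∧ r' = r''

/-! ### TFSMs with timed guards -/

/-- A TFSM with timed guards. -/
structure TFSMG (S I O : Type*) where
  trans : S → I → Guard → O → S → Prop
  init : S

/-- Input/output transition `(s,x) →(i,o) (s',0)`: some transition with a guard
containing the current clock value `x` fires. -/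
def TFSMG.IOTrans {S I O : Type*} (M : TFSMG S I O) (s : S) (x : ℝ) (i : I) (o : O)
    (s' : S) : Prop :=
  ∃ g, M.trans s i g o s' ∧ g.mem x

/-- `RunFrom M s t v w s'`: starting in state `s` (clock 0) at absolute time `t`,
reading the timed input word `v`, `M` produces the timed output word `w`
(outputs are instantaneous) and reaches `s'`. -/
inductive TFSMG.RunFrom {S I O : Type*} (M : TFSMG S I O) :
    S → ℝ → List (I × ℝ) → List (O × ℝ) → S → Prop
  | nil (s : S) (t : ℝ) : TFSMG.RunFrom M s t [] [] s
  | cons {s s' sf : S} {t t' : ℝ} {i : I} {o : O} {v : List (I × ℝ)} {w : List (O × ℝ)} :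
      M.IOTrans s (t' - t) i o s' → TFSMG.RunFrom M s' t' v w sf →
      TFSMG.RunFrom M s t ((i, t') :: v) ((o, t') :: w) sf

/-- The behavior of `M`: `w ∈ B_M(v)`. -/
def TFSMG.Produces {S I O : Type*} (M : TFSMG S I O) (v : List (I × ℝ))
    (w : List (O × ℝ)) : Prop :=
  ∃ sf, M.RunFrom M.init 0 v w sf

/-- Completeness: in every state, for every input and clock value, some transition fires. -/
def TFSMG.Complete {S I O : Type*} (M : TFSMG S I O) : Prop :=
  ∀ s i (x : ℝ), 0 ≤ x → ∃ g o s', M.trans s i g o s' ∧ g.mem x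

/-- Determinism: at most one input/output transition for each state, input and clock value. -/
def TFSMG.Deterministic {S I O : Type*} (M : TFSMG S I O) : Prop :=
  ∀ s i (x : ℝ) g g' o o' s' s'', M.trans s i g o s' → M.trans s i g' o' s'' →
    g.mem x → g'.mem x → o = o' ∧ s' = s''

/-- `N ≥ max(M)`: every integer constant in the guards of `M` is at most `N`. -/
def TFSMG.boundedBy {S I O : Type*} (M : TFSMG S I O) (N : ℕ) : Prop :=
  ∀ s i g o s', M.trans s i g o s' → g.boundedBy N

/-- The unique interval of `𝕀_N` containing the delay `t`. -/
noncomputable def INdur (N : ℕ) (t : ℝ) : Guard :=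
  if (N : ℝ) < t then infG N
  else if ∃ n : ℕ, (n : ℝ) = t then ptG ⌊t⌋₊
  else opG ⌊t⌋₊

/-- The `𝕀_N`-abstraction of a timed word (the extra `ℝ` argument is the previous
timestamp, initially `0`). -/
noncomputable def INabs {A : Type*} (N : ℕ) : ℝ → List (A × ℝ) → List (A × Guard)
  | _, [] => []
  | t, (a, t') :: v => (a, INdur N (t' - t)) :: INabs N t' v

/-- The abstract FSM `A^N_M` of a TFSM with timed guards. -/
def absFSMG {S I O : Type*} (N : ℕ) (M : TFSMG S I O) : FSM (I × Guard) O S where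
  trans s p o s' := p.2 ∈ IN N ∧ ∃ g, M.trans s p.1 g o s' ∧ p.2.subset g
  init := M.init

/-- `𝕀_N`-bisimulation between a TFSM with timed guards and an untimed FSM. -/
def INBisim {S I O R : Type*} (N : ℕ) (M : TFSMG S I O) (U : FSM (I × Guard) O R)
    (Rel : S → R → Prop) : Prop :=
  ∀ s r, Rel s r →
    (∀ i g o s', M.trans s i g o s' → ∀ J ∈ IN N, J.subset g →
        ∃ r', U.trans r (i, J) o r' ∧ Rel s' r') ∧
    (∀ i J o r', J ∈ IN N → U.trans r (i, J) o r' →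
        ∃ g s', M.trans s i g o s' ∧ J.subset g ∧ Rel s' r')

/-! ### TFSMs with timeouts -/

/-- A TFSM with timeouts; `timeout s = (s', none)` means timeout `∞`. -/
structure TFSMT (S I O : Type*) where
  trans : S → I → O → S → Prop
  init : S
  timeout : S → S × Option ℕ
  timeout_pos : ∀ s n, (timeout s).2 = some n → 0 < n

/-- The timed transition relation `(s,x) →t (s',x')`. -/
inductive TFSMT.Elapse {S I O : Type*} (M : TFSMT S I O) : S → ℝ → ℝ → S → ℝ → Prop
  | stay {s : S} {x t : ℝ} : 0 ≤ x → 0 ≤ t →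
      (∀ n, (M.timeout s).2 = some n → x + t < n) → TFSMT.Elapse M s x t s (x + t)
  | tmo {s : S} {x t : ℝ} {n : ℕ} : 0 ≤ x → 0 ≤ t → (M.timeout s).2 = some n →
      x + t = n → TFSMT.Elapse M s x t (M.timeout s).1 0
  | comp {s s' s'' : S} {x x' x'' t₁ t₂ : ℝ} :
      TFSMT.Elapse M s x t₁ s' x' → TFSMT.Elapse M s' x' t₂ s'' x'' →
      TFSMT.Elapse M s x (t₁ + t₂) s'' x''

/-- Input/output transition `(s,x) →(i,o) (s',0)`. -/
def TFSMT.IOTrans {S I O : Type*} (M : TFSMT S I O) (s : S) (x : ℝ) (i : I) (o : O)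
    (s' : S) : Prop :=
  M.trans s i o s' ∧ 0 ≤ x ∧ ∀ n, (M.timeout s).2 = some n → x < n

/-- Run of a TFSM with timeouts on a timed input word. -/
inductive TFSMT.RunFrom {S I O : Type*} (M : TFSMT S I O) :
    S → ℝ → List (I × ℝ) → List (O × ℝ) → S → Prop
  | nil (s : S) (t : ℝ) : TFSMT.RunFrom M s t [] [] s
  | cons {s s'' s' sf : S} {x t t' : ℝ} {i : I} {o : O} {v : List (I × ℝ)} {w : List (O × ℝ)} :
      M.Elapse s 0 (t' - t) s'' x → M.IOTrans s'' x i o s' →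
      TFSMT.RunFrom M s' t' v w sf →
      TFSMT.RunFrom M s t ((i, t') :: v) ((o, t') :: w) sf

/-- The behavior of `M`: `w ∈ B_M(v)`. -/
def TFSMT.Produces {S I O : Type*} (M : TFSMT S I O) (v : List (I × ℝ))
    (w : List (O × ℝ)) : Prop :=
  ∃ sf, M.RunFrom M.init 0 v w sf

def TFSMT.Complete {S I O : Type*} (M : TFSMT S I O) : Prop :=
  ∀ s i, ∃ o s', M.trans s i o s'

def TFSMT.Deterministic {S I O : Type*} (M : TFSMT S I O) : Prop :=
  ∀ s i o o' s' s'', M.trans s i o s' → M.trans s i o' s'' → o = o' ∧ s' = s''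

/-- The `𝟙`-abstraction of a timed word: `none` is the delay symbol `𝟙`
(the extra `ℝ` argument is the previous timestamp, initially `0`). -/
noncomputable def oneAbs {A : Type*} : ℝ → List (A × ℝ) → List (Option A)
  | _, [] => []
  | t, (a, t') :: v => List.replicate ⌊t' - t⌋₊ none ++ some a :: oneAbs t' v

/-- `𝟙`-bisimulation between a TFSM with timeouts and an untimed FSM
(`none` plays the role of `𝟙` in both alphabets). -/
def OneBisim {S I O R : Type*} (M : TFSMT S I O) (U : FSM (Option I) (Option O) R)
    (Rel : S → ℝ → R → Prop) : Prop :=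
  ∀ s x r, Rel s x r →
    (∀ t s' x', 0 ≤ t → ⌊x + t⌋₊ = ⌊x + 1⌋₊ → M.Elapse s x t s' x' →
        ∃ r', U.trans r none none r' ∧ Rel s' x' r') ∧
    (∀ r', U.trans r none none r' → ∀ t, 0 ≤ t → ⌊x + t⌋₊ = ⌊x + 1⌋₊ →
        ∃ s' x', M.Elapse s x t s' x' ∧ Rel s' x' r') ∧
    (∀ t i o s', 0 ≤ t → ⌊x⌋₊ = ⌊x + t⌋₊ → M.Elapse s x t s (x + t) →
        M.IOTrans s (x + t) i o s' → ∃ r', U.trans r (some i) (some o) r' ∧ Rel s' 0 r') ∧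
    (∀ i o r', U.trans r (some i) (some o) r' → ∀ t, 0 ≤ t → ⌊x⌋₊ = ⌊x + t⌋₊ →
        ∃ s', M.Elapse s x t s (x + t) ∧ M.IOTrans s (x + t) i o s' ∧ Rel s' 0 r')

/-- The `𝟙`-abstract FSM `A_M` of a TFSM with timeouts. -/
def oneAbsFSM {S I O : Type*} (M : TFSMT S I O) : FSM (Option I) (Option O) (S × ℕ) where
  trans p a b q :=
    (a = none ∧ b = none ∧
      ((q.1 = p.1 ∧ q.2 = p.2 + 1 ∧ ∃ m, (M.timeout p.1).2 = some m ∧ p.2 + 1 < m) ∨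
       (M.timeout p.1 = (q.1, some (p.2 + 1)) ∧ q.2 = 0) ∨
       (p.2 = 0 ∧ (M.timeout p.1).2 = none ∧ q = p))) ∨
    (∃ i o, a = some i ∧ b = some o ∧ M.trans p.1 i o q.1 ∧ q.2 = 0)
  init := (M.init, 0)

/-- One step of the timeout function (only from states with a finite timeout). -/
def TFSMT.TimeoutStep {S I O : Type*} (M : TFSMT S I O) (s s' : S) : Prop :=
  (M.timeout s).2 ≠ none ∧ s' = (M.timeout s).1

/-- No cycles of timeout transitions. -/
def TFSMT.LoopFree {S I O : Type*} (M : TFSMT S I O) : Prop :=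
  ∀ s, ¬ Relation.TransGen M.TimeoutStep s s

/-! ### TFSMs with timed guards and timeouts -/

/-- A TFSM with both timed guards and timeouts. -/
structure TFSMGT (S I O : Type*) where
  trans : S → I → Guard → O → S → Prop
  init : S
  timeout : S → S × Option ℕ

/-- The timed transition relation `(s,x) →t (s',x')`. -/
inductive TFSMGT.Elapse {S I O : Type*} (M : TFSMGT S I O) : S → ℝ → ℝ → S → ℝ → Prop
  | stay {s : S} {x t : ℝ} : 0 ≤ x → 0 ≤ t →
      (∀ n, (M.timeout s).2 = some n → x + t < n) → TFSMGT.Elapse M s x t s (x + t)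
  | tmo {s : S} {x t : ℝ} {n : ℕ} : 0 ≤ x → 0 ≤ t → (M.timeout s).2 = some n →
      x + t = n → TFSMGT.Elapse M s x t (M.timeout s).1 0
  | comp {s s' s'' : S} {x x' x'' t₁ t₂ : ℝ} :
      TFSMGT.Elapse M s x t₁ s' x' → TFSMGT.Elapse M s' x' t₂ s'' x'' →
      TFSMGT.Elapse M s x (t₁ + t₂) s'' x''

/-- Input/output transition `(s,x) →(i,o) (s',0)`. -/
def TFSMGT.IOTrans {S I O : Type*} (M : TFSMGT S I O) (s : S) (x : ℝ) (i : I) (o : O)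
    (s' : S) : Prop :=
  (∃ g, M.trans s i g o s' ∧ g.mem x) ∧ 0 ≤ x ∧ ∀ n, (M.timeout s).2 = some n → x < n

/-- Run of a TFSM with timed guards and timeouts on a timed input word. -/
inductive TFSMGT.RunFrom {S I O : Type*} (M : TFSMGT S I O) :
    S → ℝ → List (I × ℝ) → List (O × ℝ) → S → Prop
  | nil (s : S) (t : ℝ) : TFSMGT.RunFrom M s t [] [] s
  | cons {s s'' s' sf : S} {x t t' : ℝ} {i : I} {o : O} {v : List (I × ℝ)} {w : List (O × ℝ)} :
      M.Elapse s 0 (t' - t) s'' x → M.IOTrans s'' x i o s' →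
      TFSMGT.RunFrom M s' t' v w sf →
      TFSMGT.RunFrom M s t ((i, t') :: v) ((o, t') :: w) sf

def TFSMGT.Produces {S I O : Type*} (M : TFSMGT S I O) (v : List (I × ℝ))
    (w : List (O × ℝ)) : Prop :=
  ∃ sf, M.RunFrom M.init 0 v w sf

def TFSMGT.Complete {S I O : Type*} (M : TFSMGT S I O) : Prop :=
  ∀ s i (x : ℝ), 0 ≤ x → (∀ n, (M.timeout s).2 = some n → x < n) →
    ∃ g o s', M.trans s i g o s' ∧ g.mem x

def TFSMGT.Deterministic {S I O : Type*} (M : TFSMGT S I O) : Prop :=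
  ∀ s i (x : ℝ) g g' o o' s' s'', M.trans s i g o s' → M.trans s i g' o' s'' →
    g.mem x → g'.mem x → o = o' ∧ s' = s''

/-- `N ≥ max(M)`: all guard constants and all finite timeouts of `M` are at most `N`. -/
def TFSMGT.boundedBy {S I O : Type*} (M : TFSMGT S I O) (N : ℕ) : Prop :=
  (∀ s i g o s', M.trans s i g o s' → g.boundedBy N) ∧
  (∀ s m, (M.timeout s).2 = some m → m ≤ N)

/-- `N = max(M)`: `N` is the greatest integer constant appearing in `M`. -/
def TFSMGT.maxConst {S I O : Type*} (M : TFSMGT S I O) (N : ℕ) : Prop :=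
  M.boundedBy N ∧ ∀ N', M.boundedBy N' → N ≤ N'

/-- Number of `𝕥` symbols abstracting a delay `t`. -/
noncomputable def tNum (t : ℝ) : ℕ :=
  if ∃ n : ℕ, (n : ℝ) = t then 2 * ⌊t⌋₊ else 2 * ⌊t⌋₊ + 1

/-- The `𝕥`-abstraction of a timed word: `none` is the delay symbol `𝕥`
(the extra `ℝ` argument is the previous timestamp, initially `0`). -/
noncomputable def tAbs {A : Type*} : ℝ → List (A × ℝ) → List (Option A)
  | _, [] => []
  | t, (a, t') :: v => List.replicate (tNum (t' - t)) none ++ some a :: tAbs t' v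

/-- `𝕥`-bisimulation between a TFSM with timed guards and timeouts and an untimed FSM. -/
def TBisim {S I O R : Type*} (M : TFSMGT S I O) (U : FSM (Option I) (Option O) R)
    (Rel : S → ℝ → R → Prop) : Prop :=
  ∀ s x r, Rel s x r →
    (∀ t s' x', 0 < t → t < 1 → ((∃ n : ℕ, (n : ℝ) = x) ∨ ∃ n : ℕ, (n : ℝ) = x + t) →
        M.Elapse s x t s' x' → ∃ r', U.trans r none none r' ∧ Rel s' x' r') ∧
    (∀ r', U.trans r none none r' →
        ∀ t, 0 < t → t < 1 → ((∃ n : ℕ, (n : ℝ) = x) ∨ ∃ n : ℕ, (n : ℝ) = x + t) →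
        ∃ s' x', M.Elapse s x t s' x' ∧ Rel s' x' r') ∧
    (∀ i o s', M.IOTrans s x i o s' → ∃ r', U.trans r (some i) (some o) r' ∧ Rel s' 0 r') ∧
    (∀ i o r', U.trans r (some i) (some o) r' →
        ∃ s', M.IOTrans s x i o s' ∧ Rel s' 0 r')

/-- The `𝕥`-abstract FSM `A_M` of a TFSM with timed guards and timeouts. -/
def tAbsFSM {S I O : Type*} (N : ℕ) (M : TFSMGT S I O) :
    FSM (Option I) (Option O) (S × Guard) where
  trans p a b q :=
    (a = none ∧ b = none ∧
      ((∃ n, p.2 = ptG n ∧ q = (p.1, opG n) ∧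
          ∀ m, (M.timeout p.1).2 = some m → n + 1 ≤ m) ∨
       (∃ n, p.2 = opG n ∧ q = (p.1, ptG (n + 1)) ∧
          ∀ m, (M.timeout p.1).2 = some m → n + 1 < m) ∨
       (∃ n, p.2 = opG n ∧ M.timeout p.1 = (q.1, some (n + 1)) ∧ q.2 = ptG 0) ∨
       (p.2 = infG N ∧ (M.timeout p.1).2 = none ∧ q = p))) ∨
    (∃ i o, a = some i ∧ b = some o ∧ q.2 = ptG 0 ∧
      ∃ g, M.trans p.1 i g o q.1 ∧ p.2.subset g)
  init := (M.init, ptG 0)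

section Statement6Aux

variable {S I O : Type*} (M : TFSMT S I O)

/-- Fuelled canonical elapse function: from state `s` with "target clock value" `y`
(current clock plus remaining delay), compute the resulting timed state. -/
noncomputable def elF : ℕ → S → ℝ → Option (S × ℝ)
  | 0, s, y => ((M.timeout s).2).elim (some (s, y))
      (fun n => if y < (n : ℝ) then some (s, y) else none)
  | (k+1), s, y => ((M.timeout s).2).elim (some (s, y))
      (fun n => if y < (n : ℝ) then some (s, y) else elF k (M.timeout s).1 (y - n))

lemma elF_none {s : S} (h : (M.timeout s).2 = none) (k : ℕ) (y : ℝ) :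
    elF M k s y = some (s, y) := by cases k <;> simp [elF, h]

lemma elF_lt {s : S} {n : ℕ} {y : ℝ} (h : (M.timeout s).2 = some n) (hy : y < (n : ℝ))
    (k : ℕ) : elF M k s y = some (s, y) := by cases k <;> simp [elF, h, hy]

lemma elF_ge_zero {s : S} {n : ℕ} {y : ℝ} (h : (M.timeout s).2 = some n)
    (hy : ¬ y < (n : ℝ)) : elF M 0 s y = none := by simp [elF, h, hy]

lemma elF_ge_succ {s : S} {n : ℕ} {y : ℝ} (h : (M.timeout s).2 = some n)
    (hy : ¬ y < (n : ℝ)) (k : ℕ) :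
    elF M (k+1) s y = elF M k (M.timeout s).1 (y - n) := by simp [elF, h, hy]

lemma elF_zero (k : ℕ) (s : S) : elF M k s 0 = some (s, 0) := by
  rcases h : (M.timeout s).2 with _ | n
  · exact elF_none M h k 0
  · exact elF_lt M h (by exact_mod_cast M.timeout_pos s n h) k

lemma elF_mono : ∀ (k : ℕ) {s : S} {y : ℝ} {q}, elF M k s y = some q →
    ∀ m, elF M (k + m) s y = some q := by
  intro k
  induction k with
  | zero =>
    intro s y q h m
    rcases ht : (M.timeout s).2 with _ | n
    · rw [elF_none M ht] at h ⊢; exact h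
    · by_cases hy : y < (n : ℝ)
      · rw [elF_lt M ht hy] at h ⊢; exact h
      · rw [elF_ge_zero M ht hy] at h; exact absurd h (by simp)
  | succ k ih =>
    intro s y q h m
    rcases ht : (M.timeout s).2 with _ | n
    · rw [elF_none M ht] at h ⊢; exact h
    · by_cases hy : y < (n : ℝ)
      · rw [elF_lt M ht hy] at h ⊢; exact h
      · rw [elF_ge_succ M ht hy] at h
        have hkm : k + 1 + m = (k + m) + 1 := by omega
        rw [hkm, elF_ge_succ M ht hy]
        exact ih h m

lemma elF_fun {k k' : ℕ} {s : S} {y : ℝ} {q q'} (h : elF M k s y = some q)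
    (h' : elF M k' s y = some q') : q = q' := by
  have h1 := elF_mono M k h k'
  have h2 := elF_mono M k' h' k
  rw [Nat.add_comm] at h2
  rw [h1] at h2
  exact Option.some.inj h2

lemma elF_shift : ∀ (m : ℕ) {s : S} {y : ℝ} {σ : S} {ξ : ℝ},
    elF M m s y = some (σ, ξ) → ∀ {j : ℕ} {q} {d : ℝ}, 0 ≤ d →
    elF M j σ (ξ + d) = some q → elF M (m + j) s (y + d) = some q := by
  intro m
  induction m with
  | zero =>
    intro s y σ ξ h j q d _ h2
    rcases ht : (M.timeout s).2 with _ | n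
    · rw [elF_none M ht] at h
      obtain ⟨rfl, rfl⟩ : s = σ ∧ y = ξ := by simpa using h
      simpa using h2
    · by_cases hy : y < (n : ℝ)
      · rw [elF_lt M ht hy] at h
        obtain ⟨rfl, rfl⟩ : s = σ ∧ y = ξ := by simpa using h
        simpa using h2
      · rw [elF_ge_zero M ht hy] at h; exact absurd h (by simp)
  | succ m ih =>
    intro s y σ ξ h j q d hd h2
    rcases ht : (M.timeout s).2 with _ | n
    · rw [elF_none M ht] at h
      obtain ⟨rfl, rfl⟩ : s = σ ∧ y = ξ := by simpa using h
      have := elF_mono M j h2 (m + 1)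
      rwa [show j + (m + 1) = m + 1 + j by omega] at this
    · by_cases hy : y < (n : ℝ)
      · rw [elF_lt M ht hy] at h
        obtain ⟨rfl, rfl⟩ : s = σ ∧ y = ξ := by simpa using h
        have := elF_mono M j h2 (m + 1)
        rwa [show j + (m + 1) = m + 1 + j by omega] at this
      · rw [elF_ge_succ M ht hy] at h
        have hy2 : ¬ y + d < (n : ℝ) := by push_neg at hy ⊢; linarith
        rw [show m + 1 + j = (m + j) + 1 by omega, elF_ge_succ M ht hy2]
        have := ih h hd h2
        rwa [sub_add_eq_add_sub] at this

lemma elF_inv : ∀ (k : ℕ) {s : S} {y : ℝ} {σ : S} {ξ : ℝ}, 0 ≤ y →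
    elF M k s y = some (σ, ξ) →
    0 ≤ ξ ∧ (∃ c : ℕ, (c : ℝ) ≤ y ∧ ξ = y - c) ∧
      ∀ n, (M.timeout σ).2 = some n → ξ < (n : ℝ) := by
  intro k
  induction k with
  | zero =>
    intro s y σ ξ hy h
    rcases ht : (M.timeout s).2 with _ | n
    · rw [elF_none M ht] at h
      obtain ⟨rfl, rfl⟩ : s = σ ∧ y = ξ := by simpa using h
      exact ⟨hy, ⟨0, by simpa, by simp⟩, fun n hn => by rw [ht] at hn; cases hn⟩
    · by_cases hy' : y < (n : ℝ)
      · rw [elF_lt M ht hy'] at h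
        obtain ⟨rfl, rfl⟩ : s = σ ∧ y = ξ := by simpa using h
        refine ⟨hy, ⟨0, by simpa, by simp⟩, fun m hm => ?_⟩
        rw [ht] at hm
        obtain rfl : n = m := by injection hm
        exact hy'
      · rw [elF_ge_zero M ht hy'] at h; exact absurd h (by simp)
  | succ k ih =>
    intro s y σ ξ hy h
    rcases ht : (M.timeout s).2 with _ | n
    · rw [elF_none M ht] at h
      obtain ⟨rfl, rfl⟩ : s = σ ∧ y = ξ := by simpa using h
      exact ⟨hy, ⟨0, by simpa, by simp⟩, fun n hn => by rw [ht] at hn; cases hn⟩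
    · by_cases hy' : y < (n : ℝ)
      · rw [elF_lt M ht hy'] at h
        obtain ⟨rfl, rfl⟩ : s = σ ∧ y = ξ := by simpa using h
        refine ⟨hy, ⟨0, by simpa, by simp⟩, fun m hm => ?_⟩
        rw [ht] at hm
        obtain rfl : n = m := by injection hm
        exact hy'
      · rw [elF_ge_succ M ht hy'] at h
        push_neg at hy'
        have hn1 : (1 : ℝ) ≤ (n : ℝ) := by exact_mod_cast M.timeout_pos s n ht
        obtain ⟨h0, ⟨c, hc, hξ⟩, hv⟩ := ih (by linarith) h
        refine ⟨h0, ⟨n + c, by push_cast; linarith, by rw [hξ]; push_cast; ring⟩, hv⟩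

lemma elF_total : ∀ (N : ℕ) (s : S) (y : ℝ), 0 ≤ y → ⌊y⌋₊ ≤ N →
    ∃ q, elF M N s y = some q := by
  intro N
  induction N with
  | zero =>
    intro s y hy hN
    rcases ht : (M.timeout s).2 with _ | n
    · exact ⟨_, elF_none M ht 0 y⟩
    · have hn : 1 ≤ n := M.timeout_pos s n ht
      have h1 : y < ((⌊y⌋₊ : ℝ) + 1) := Nat.lt_floor_add_one y
      have : y < (n : ℝ) := by
        have : ((⌊y⌋₊ : ℝ) + 1) ≤ (n : ℝ) := by
          have : ⌊y⌋₊ + 1 ≤ n := by omega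
          exact_mod_cast this
        linarith
      exact ⟨_, elF_lt M ht this 0⟩
  | succ N ih =>
    intro s y hy hN
    rcases ht : (M.timeout s).2 with _ | n
    · exact ⟨_, elF_none M ht (N+1) y⟩
    · by_cases hy' : y < (n : ℝ)
      · exact ⟨_, elF_lt M ht hy' (N+1)⟩
      · push_neg at hy'
        have hn : 1 ≤ n := M.timeout_pos s n ht
        have hny : n ≤ ⌊y⌋₊ := Nat.le_floor hy'
        have hfl : ⌊y - (n : ℝ)⌋₊ = ⌊y⌋₊ - n := Nat.floor_sub_natCast y n
        obtain ⟨q, hq⟩ := ih (M.timeout s).1 (y - n)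
          (by have : (n : ℝ) ≤ y := hy'; linarith) (by omega)
        exact ⟨q, by rw [elF_ge_succ M ht (not_lt.mpr hy')]; exact hq⟩

lemma elF_to_elapse : ∀ (k : ℕ) {s : S} {y : ℝ} {σ : S} {ξ : ℝ},
    elF M k s y = some (σ, ξ) → ∀ {x : ℝ}, 0 ≤ x → x ≤ y →
    (∀ n, (M.timeout s).2 = some n → x ≤ (n : ℝ)) → M.Elapse s x (y - x) σ ξ := by
  intro k
  induction k with
  | zero =>
    intro s y σ ξ h x hx hxy hv
    rcases ht : (M.timeout s).2 with _ | n
    · rw [elF_none M ht] at h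
      obtain ⟨rfl, rfl⟩ : s = σ ∧ y = ξ := by simpa using h
      have h2 : x + (y - x) = y := by ring
      have := TFSMT.Elapse.stay (M := M) (s := s) (x := x) (t := y - x) hx (by linarith)
        (fun n hn => by rw [ht] at hn; cases hn)
      rwa [h2] at this
    · by_cases hy' : y < (n : ℝ)
      · rw [elF_lt M ht hy'] at h
        obtain ⟨rfl, rfl⟩ : s = σ ∧ y = ξ := by simpa using h
        have h2 : x + (y - x) = y := by ring
        have := TFSMT.Elapse.stay (M := M) (s := s) (x := x) (t := y - x) hx (by linarith)
          (fun m hm => by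
            rw [ht] at hm
            obtain rfl : n = m := by injection hm
            rw [h2]; exact hy')
        rwa [h2] at this
      · rw [elF_ge_zero M ht hy'] at h; exact absurd h (by simp)
  | succ k ih =>
    intro s y σ ξ h x hx hxy hv
    rcases ht : (M.timeout s).2 with _ | n
    · rw [elF_none M ht] at h
      obtain ⟨rfl, rfl⟩ : s = σ ∧ y = ξ := by simpa using h
      have h2 : x + (y - x) = y := by ring
      have := TFSMT.Elapse.stay (M := M) (s := s) (x := x) (t := y - x) hx (by linarith)
        (fun n hn => by rw [ht] at hn; cases hn)
      rwa [h2] at this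
    · by_cases hy' : y < (n : ℝ)
      · rw [elF_lt M ht hy'] at h
        obtain ⟨rfl, rfl⟩ : s = σ ∧ y = ξ := by simpa using h
        have h2 : x + (y - x) = y := by ring
        have := TFSMT.Elapse.stay (M := M) (s := s) (x := x) (t := y - x) hx (by linarith)
          (fun m hm => by
            rw [ht] at hm
            obtain rfl : n = m := by injection hm
            rw [h2]; exact hy')
        rwa [h2] at this
      · rw [elF_ge_succ M ht hy'] at h
        push_neg at hy'
        have hxn : x ≤ (n : ℝ) := hv n ht
        have e1 : M.Elapse s x ((n : ℝ) - x) (M.timeout s).1 0 :=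
          TFSMT.Elapse.tmo hx (by linarith) ht (by ring)
        have e2 : M.Elapse (M.timeout s).1 0 ((y - n) - 0) σ ξ :=
          ih h le_rfl (by linarith) (fun m _ => by positivity)
        have h3 : y - x = ((n : ℝ) - x) + ((y - (n : ℝ)) - 0) := by ring
        rw [h3]
        exact TFSMT.Elapse.comp e1 e2

lemma elapse_t_nonneg {s : S} {x t : ℝ} {σ : S} {ξ : ℝ} (h : M.Elapse s x t σ ξ) :
    0 ≤ t := by
  induction h with
  | stay _ htt _ => exact htt
  | tmo _ htt _ _ => exact htt
  | comp _ _ ih1 ih2 => linarith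

lemma elF_of_elapse {s : S} {x t : ℝ} {σ : S} {ξ : ℝ} (h : M.Elapse s x t σ ξ) :
    ∃ k, elF M k s (x + t) = some (σ, ξ) := by
  induction h with
  | @stay s x t hx htt hn =>
    rcases ht : (M.timeout s).2 with _ | n
    · exact ⟨0, elF_none M ht 0 _⟩
    · exact ⟨0, elF_lt M ht (hn n ht) 0⟩
  | @tmo s x t n hx htt hsome heq =>
    refine ⟨1, ?_⟩
    rw [heq, elF_ge_succ M hsome (lt_irrefl _), sub_self]
    exact elF_zero M 0 (M.timeout s).1
  | @comp s s' s'' x x' x'' t₁ t₂ h1 h2 ih1 ih2 =>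
    obtain ⟨k₁, hk₁⟩ := ih1
    obtain ⟨k₂, hk₂⟩ := ih2
    have hd := elapse_t_nonneg M h2
    have := elF_shift M k₁ hk₁ hd hk₂
    exact ⟨k₁ + k₂, by rwa [← add_assoc]⟩

lemma elapse_det {s : S} {x t : ℝ} {σ σ' : S} {ξ ξ' : ℝ} (h : M.Elapse s x t σ ξ)
    (h' : M.Elapse s x t σ' ξ') : σ = σ' ∧ ξ = ξ' := by
  obtain ⟨k, hk⟩ := elF_of_elapse M h
  obtain ⟨k', hk'⟩ := elF_of_elapse M h'
  have := elF_fun M hk hk'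
  exact ⟨congrArg Prod.fst this, congrArg Prod.snd this⟩

lemma run_append {Γi Γo R' : Type*} {U : FSM Γi Γo R'} {v' : List Γi} {w' : List Γo}
    {r'' : R'} : ∀ {r : R'} {v : List Γi} {w : List Γo} {r' : R'},
    U.Run r v w r' → U.Run r' v' w' r'' → U.Run r (v ++ v') (w ++ w') r'' := by
  intro r v w r' h
  induction h with
  | nil r => intro h'; simpa using h'
  | cons htr _ ih => intro h'; exact FSM.Run.cons htr (ih h')

lemma run_det {Γi Γo R' : Type*} {U : FSM Γi Γo R'} (hUD : U.Deterministic) :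
    ∀ {r : R'} {v : List Γi} {w : List Γo} {rf : R'}, U.Run r v w rf →
    ∀ {w' : List Γo} {rf' : R'}, U.Run r v w' rf' → w = w' ∧ rf = rf' := by
  intro r v w rf h
  induction h with
  | nil => intro w' rf' h'; cases h'; exact ⟨rfl, rfl⟩
  | cons htr hrest ih =>
    intro w' rf' h'
    cases h' with
    | cons htr' hrest' =>
      obtain ⟨rfl, rfl⟩ := hUD _ _ _ _ _ _ htr htr'
      obtain ⟨hw, hrf⟩ := ih hrest'
      exact ⟨by rw [hw], hrf⟩

variable {R : Type*} {U : FSM (Option I) (Option O) R} {Rel : S → ℝ → R → Prop}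

lemma oneStep (hB : OneBisim M U Rel) {m : ℕ} {s σ : S} {y ξ : ℝ} {r : R} (hy : 0 ≤ y)
    (h : elF M m s y = some (σ, ξ)) (hr : Rel σ ξ r) :
    ∃ (m' : ℕ) (σ' : S) (ξ' : ℝ) (r' : R), elF M m' s (y + 1) = some (σ', ξ') ∧
      U.trans r none none r' ∧ Rel σ' ξ' r' := by
  obtain ⟨hξ0, -, hval⟩ := elF_inv M m hy h
  obtain ⟨⟨σ', ξ'⟩, hq⟩ := elF_total M ⌊ξ + 1⌋₊ σ (ξ + 1) (by linarith) le_rfl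
  have hel : M.Elapse σ ξ ((ξ + 1) - ξ) σ' ξ' :=
    elF_to_elapse M _ hq hξ0 (by linarith) (fun n hn => le_of_lt (hval n hn))
  rw [add_sub_cancel_left] at hel
  obtain ⟨r', htr, hr'⟩ := (hB σ ξ r hr).1 1 σ' ξ' zero_le_one rfl hel
  exact ⟨m + ⌊ξ + 1⌋₊, σ', ξ', r', elF_shift M m h zero_le_one hq, htr, hr'⟩

lemma iterSteps (hB : OneBisim M U Rel) (k : ℕ) : ∀ {s : S} {r : R}, Rel s 0 r →
    ∃ (m : ℕ) (σ : S) (ξ : ℝ) (rk : R), elF M m s (k : ℝ) = some (σ, ξ) ∧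
      U.Run r (List.replicate k none) (List.replicate k none) rk ∧ Rel σ ξ rk := by
  induction k with
  | zero =>
    intro s r hr
    exact ⟨0, s, 0, r, by simpa using elF_zero M 0 s, by simpa using FSM.Run.nil (U := U) r, hr⟩
  | succ k ih =>
    intro s r hr
    obtain ⟨m, σ, ξ, rk, hm, hrun, hrk⟩ := ih hr
    obtain ⟨m', σ', ξ', r', hm', htr, hr'⟩ := oneStep M hB (Nat.cast_nonneg k) hm hrk
    refine ⟨m', σ', ξ', r', by rwa [Nat.cast_succ], ?_, hr'⟩
    simp only [List.replicate_succ']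
    exact run_append hrun (FSM.Run.cons htr (FSM.Run.nil r'))

lemma mainRun (hB : OneBisim M U Rel) :
    ∀ {s : S} {t : ℝ} {v : List (I × ℝ)} {w : List (O × ℝ)} {sf : S},
      M.RunFrom s t v w sf → ∀ {r : R}, Rel s 0 r →
      List.Chain (· ≤ ·) t (v.map Prod.snd) →
      ∃ rf, U.Run r (oneAbs t v) (oneAbs t w) rf ∧ Rel sf 0 rf := by
  intro s t v w sf h
  induction h with
  | nil s t => intro r hr _; exact ⟨r, by simpa [oneAbs] using FSM.Run.nil (U := U) r, hr⟩
  | @cons s s'' s' sf x t t' i o v w hE hIO hrest ih =>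
    intro r hr hch
    simp only [List.map_cons, List.Chain, List.isChain_cons_cons] at hch
    obtain ⟨hle, hch'⟩ := hch
    set d := t' - t with hd_def
    have hd : 0 ≤ d := by rw [hd_def]; linarith
    set k := ⌊d⌋₊ with hk
    obtain ⟨m, σ, ξ, rk, hm, hrun1, hrk⟩ := iterSteps M hB k hr
    obtain ⟨hξ0, ⟨c, hc, hξeq⟩, hval⟩ := elF_inv M m (Nat.cast_nonneg k) hm
    have hck : c ≤ k := by exact_mod_cast hc
    have hξnat : ξ = ((k - c : ℕ) : ℝ) := by rw [hξeq]; push_cast [hck]; ring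
    have hdk : (k : ℝ) ≤ d := Nat.floor_le hd
    have hdk1 : d < (k : ℝ) + 1 := Nat.lt_floor_add_one d
    have hstay : M.Elapse σ ξ (d - k) σ (ξ + (d - k)) := by
      refine TFSMT.Elapse.stay hξ0 (by linarith) ?_
      intro n hn
      have h1 : ξ < (n : ℝ) := hval n hn
      have h2 : (k - c : ℕ) < n := by rw [hξnat] at h1; exact_mod_cast h1
      have h3 : ξ + 1 ≤ (n : ℝ) := by
        rw [hξnat]
        have : (k - c : ℕ) + 1 ≤ n := h2
        exact_mod_cast this
      linarith
    have hfull : M.Elapse s 0 d σ (ξ + (d - k)) := by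
      have e1 : M.Elapse s 0 ((k : ℝ) - 0) σ ξ :=
        elF_to_elapse M m hm le_rfl (Nat.cast_nonneg k) (fun n _ => Nat.cast_nonneg n)
      have h4 : d = ((k : ℝ) - 0) + (d - k) := by ring
      nth_rewrite 1 [h4]
      exact TFSMT.Elapse.comp e1 hstay
    obtain ⟨h5, h6⟩ : s'' = σ ∧ x = ξ + (d - k) := elapse_det M hE hfull
    rw [h5, h6] at hIO
    have hfloor : ⌊ξ⌋₊ = ⌊ξ + (d - k)⌋₊ := by
      have h1 : ⌊ξ⌋₊ = k - c := by rw [hξnat]; exact Nat.floor_natCast _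
      have h2 : ξ + (d - k) = d - (c : ℝ) := by rw [hξeq]; ring
      rw [h1, h2, Nat.floor_sub_natCast]
    obtain ⟨r', htr, hr'⟩ := (hB σ ξ rk hrk).2.2.1 (d - k) i o s' (by linarith) hfloor hstay hIO
    obtain ⟨rf, hrun2, hrf⟩ := ih hr' hch'
    refine ⟨rf, ?_, hrf⟩
    show U.Run r (oneAbs t ((i, t') :: v)) (oneAbs t ((o, t') :: w)) rf
    simp only [oneAbs]
    rw [← hd_def, ← hk]
    exact run_append hrun1 (FSM.Run.cons htr hrun2)

lemma chain_of_tw : ∀ (v : List (I × ℝ)) (t : ℝ), v.Chain' (fun p q => p.2 < q.2) →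
    (∀ p ∈ v.head?, t ≤ p.2) → List.Chain (· ≤ ·) t (v.map Prod.snd) := by
  intro v
  induction v with
  | nil => intro t _ _; simp [List.Chain]
  | cons p v ih =>
    intro t hc hh
    rw [List.map_cons]
    refine List.Chain.cons (hh p rfl) (ih p.2 hc.tail ?_)
    intro q hq
    exact le_of_lt ((List.isChain_cons.mp hc).1 q hq)

end Statement6Aux

/-- If a complete deterministic TFSM with timeouts `T` and a
complete deterministic untimed FSM `U` are related by a `𝟙`-bisimulation relating
`(s0,0)` to `r0`, then for every timed input word `v`,
`𝟙(B_T(v)) = B_U(𝟙(v))`. -/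
theorem statement6 {S R I O : Type} [Finite S] (T : TFSMT S I O)
    (U : FSM (Option I) (Option O) R)
    (hTC : T.Complete) (hTD : T.Deterministic)
    (hUC : U.Complete) (hUD : U.Deterministic)
    (Rel : S → ℝ → R → Prop) (hB : OneBisim T U Rel) (h0 : Rel T.init 0 U.init) :
    ∀ (v : List (I × ℝ)) (w : List (O × ℝ)), IsTimedWord v → T.Produces v w →
      ∀ u : List (Option O), U.Produces (oneAbs 0 v) u ↔ u = oneAbs 0 w := by
  intro v w hTW hP u
  obtain ⟨sf, hrun⟩ := hP
  have hch : List.Chain (· ≤ ·) 0 (v.map Prod.snd) :=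
    chain_of_tw v 0 hTW.1 (fun p hp => hTW.2 p (List.mem_of_mem_head? hp))
  obtain ⟨rf, hUrun, -⟩ := mainRun T hB hrun h0 hch
  constructor
  · rintro ⟨rf', hUrun'⟩
    exact (run_det hUD hUrun' hUrun).1
  · rintro rfl
    exact ⟨rf, hUrun⟩

end TFSMPaper
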